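/- arXiv:0905.2639 — 3 statements merged into one kernel-verified Lean document; each statement's English description precedes it below -/
import Mathlib

section
/- Let p ≥ 2 and n ≥ 1 be integers and let θ and θ' be two parameter vectors of Ising models on p vertices. If X_1, …, X_n are drawn i.i.d. from P_θ, then the probability that the rescaled log-likelihood under θ' is at least that under θ, i.e. P[ (1/n) Σ_{i=1}^n log P_{θ'}(X_i) ≥ (1/n) Σ_{i=1}^n log P_θ(X_i) ], is at most exp( −(n/2) · J(θ‖θ') ), where J(θ‖θ') = D((θ+θ')/2 ‖ θ) + D((θ+θ')/2 ‖ θ'). -/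
open scoped Classical BigOperators
open Real

noncomputable section

/-- Sign of a Boolean spin: `true ↦ 1`, `false ↦ -1`. -/
def sgn (b : Bool) : ℝ := if b then 1 else -1

/-- Ising energy `Σ_{s<t} θ_{st} x_s x_t`. -/
def energy {p : ℕ} (θ : Fin p → Fin p → ℝ) (x : Fin p → Bool) : ℝ :=
  ∑ s : Fin p, ∑ t : Fin p, if s < t then θ s t * sgn (x s) * sgn (x t) else 0

/-- Partition function `Z(θ)`. -/
def Zpart {p : ℕ} (θ : Fin p → Fin p → ℝ) : ℝ :=
  ∑ x : Fin p → Bool, Real.exp (energy θ x)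

/-- Ising probability mass function `P_θ`. -/
def isingP {p : ℕ} (θ : Fin p → Fin p → ℝ) (x : Fin p → Bool) : ℝ :=
  Real.exp (energy θ x) / Zpart θ

/-- Probability of an event under `n` i.i.d. samples from `P_θ`. -/
def probn {p : ℕ} (n : ℕ) (θ : Fin p → Fin p → ℝ)
    (A : (Fin n → Fin p → Bool) → Prop) : ℝ :=
  ∑ xs : Fin n → Fin p → Bool, if A xs then ∏ i, isingP θ (xs i) else 0

/-- Probability of a single-sample event under `P_θ`. -/
def prob1 {p : ℕ} (θ : Fin p → Fin p → ℝ) (A : (Fin p → Bool) → Prop) : ℝ :=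
  ∑ x : Fin p → Bool, if A x then isingP θ x else 0

/-- A parameter vector: symmetric array vanishing on the diagonal. -/
def IsSymParam {p : ℕ} (θ : Fin p → Fin p → ℝ) : Prop :=
  (∀ s t, θ s t = θ t s) ∧ (∀ s, θ s s = 0)

/-- The class `Θ_{λ,ω}(G)` of admissible parameter vectors for graph `G`. -/
def ParamClass {p : ℕ} (G : SimpleGraph (Fin p)) (lam om : ℝ)
    (θ : Fin p → Fin p → ℝ) : Prop :=
  IsSymParam θ ∧ (∀ s t : Fin p, ¬ G.Adj s t → θ s t = 0) ∧
    (∀ s t : Fin p, G.Adj s t → lam ≤ |θ s t|) ∧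
    (∀ s : Fin p, (∑ t : Fin p, |θ s t|) ≤ om)

/-- The class `G_{p,d}` of graphs with maximum degree at most `d`. -/
def degClass (p d : ℕ) : Set (SimpleGraph (Fin p)) :=
  {G | ∀ v : Fin p, ({u | G.Adj v u}).ncard ≤ d}

/-- The class `G_{p,k}` of graphs with at most `k` edges. -/
def edgeClass (p k : ℕ) : Set (SimpleGraph (Fin p)) :=
  {G | G.edgeSet.ncard ≤ k}

/-- Kullback–Leibler divergence `D(θ‖θ')` between Ising models. -/
def KLdiv {p : ℕ} (θ θ' : Fin p → Fin p → ℝ) : ℝ :=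
  ∑ x : Fin p → Bool, isingP θ x * Real.log (isingP θ x / isingP θ' x)

/-- Symmetrized KL divergence `S(θ‖θ')`. -/
def symKL {p : ℕ} (θ θ' : Fin p → Fin p → ℝ) : ℝ := KLdiv θ θ' + KLdiv θ' θ

/-- The divergence `J(θ‖θ') = D((θ+θ')/2‖θ) + D((θ+θ')/2‖θ')`. -/
def Jdiv {p : ℕ} (θ θ' : Fin p → Fin p → ℝ) : ℝ :=
  KLdiv (fun s t => (θ s t + θ' s t) / 2) θ +
    KLdiv (fun s t => (θ s t + θ' s t) / 2) θ'

/-- Mean parameter `μ_{st}(θ) = E_θ[X_s X_t]`. -/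
def meanPar {p : ℕ} (θ : Fin p → Fin p → ℝ) (s t : Fin p) : ℝ :=
  ∑ x : Fin p → Bool, isingP θ x * (sgn (x s) * sgn (x t))

lemma Zpart_pos {p : ℕ} (θ : Fin p → Fin p → ℝ) : 0 < Zpart θ :=
  Finset.sum_pos (fun x _ => Real.exp_pos _) Finset.univ_nonempty

lemma isingP_pos {p : ℕ} (θ : Fin p → Fin p → ℝ) (x : Fin p → Bool) :
    0 < isingP θ x := div_pos (Real.exp_pos _) (Zpart_pos θ)

lemma log_isingP {p : ℕ} (θ : Fin p → Fin p → ℝ) (x : Fin p → Bool) :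
    Real.log (isingP θ x) = energy θ x - Real.log (Zpart θ) := by
  rw [isingP, Real.log_div (Real.exp_ne_zero _) (Zpart_pos θ).ne', Real.log_exp]

lemma energy_avg {p : ℕ} (θ θ' : Fin p → Fin p → ℝ) (x : Fin p → Bool) :
    energy (fun s t => (θ s t + θ' s t) / 2) x = (energy θ x + energy θ' x) / 2 := by
  unfold energy
  rw [← Finset.sum_add_distrib, Finset.sum_div]
  refine Finset.sum_congr rfl fun s _ => ?_
  rw [← Finset.sum_add_distrib, Finset.sum_div]
  refine Finset.sum_congr rfl fun t _ => ?_
  split <;> ring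

lemma sum_isingP {p : ℕ} (θ : Fin p → Fin p → ℝ) :
    ∑ x : Fin p → Bool, isingP θ x = 1 := by
  unfold isingP
  rw [← Finset.sum_div, ← Zpart, div_self (Zpart_pos θ).ne']

lemma Jdiv_eq {p : ℕ} (θ θ' : Fin p → Fin p → ℝ) :
    Jdiv θ θ' = Real.log (Zpart θ) + Real.log (Zpart θ')
      - 2 * Real.log (Zpart (fun s t => (θ s t + θ' s t) / 2)) := by
  set m : Fin p → Fin p → ℝ := fun s t => (θ s t + θ' s t) / 2 with hm
  have key : ∀ x : Fin p → Bool,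
      isingP m x * Real.log (isingP m x / isingP θ x)
        + isingP m x * Real.log (isingP m x / isingP θ' x)
      = isingP m x * (Real.log (Zpart θ) + Real.log (Zpart θ')
          - 2 * Real.log (Zpart m)) := by
    intro x
    rw [Real.log_div (isingP_pos m x).ne' (isingP_pos θ x).ne',
        Real.log_div (isingP_pos m x).ne' (isingP_pos θ' x).ne',
        log_isingP, log_isingP, log_isingP, energy_avg]
    ring
  have : Jdiv θ θ' = ∑ x : Fin p → Bool,
      isingP m x * (Real.log (Zpart θ) + Real.log (Zpart θ')
        - 2 * Real.log (Zpart m)) := by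
    rw [Jdiv, KLdiv, KLdiv, ← Finset.sum_add_distrib]
    exact Finset.sum_congr rfl fun x _ => key x
  rw [this, ← Finset.sum_mul, sum_isingP, one_mul]

/-- Lemma 6 (large deviations for the likelihood ratio test): under `n` i.i.d.
samples from `P_θ`, the probability that the rescaled log-likelihood under `θ'` is
at least that under `θ` is at most `exp(-(n/2)·J(θ‖θ'))`. -/
theorem likelihood_large_deviations (p n : ℕ) (hp : 2 ≤ p) (hn : 1 ≤ n)
    (θ θ' : Fin p → Fin p → ℝ) :
    probn n θ (fun xs =>
        (1 / (n : ℝ)) * ∑ i, Real.log (isingP θ (xs i)) ≤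
          (1 / (n : ℝ)) * ∑ i, Real.log (isingP θ' (xs i))) ≤
      Real.exp (-(n : ℝ) / 2 * Jdiv θ θ') := by
  set m : Fin p → Fin p → ℝ := fun s t => (θ s t + θ' s t) / 2 with hm
  set c : ℝ := (Real.log (Zpart θ) + Real.log (Zpart θ')) / 2 with hc
  set g : (Fin p → Bool) → ℝ := fun x => Real.exp (energy m x - c) with hg
  have hnpos : (0:ℝ) < (n:ℝ) := by exact_mod_cast hn
  -- step 1: bound probn by the sum of products of g
  have step1 : probn n θ (fun xs =>
        (1 / (n : ℝ)) * ∑ i, Real.log (isingP θ (xs i)) ≤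
          (1 / (n : ℝ)) * ∑ i, Real.log (isingP θ' (xs i))) ≤
      ∑ xs : Fin n → Fin p → Bool, ∏ i, g (xs i) := by
    refine Finset.sum_le_sum fun xs _ => ?_
    split
    · rename_i hA
      have hsum : ∑ i, Real.log (isingP θ (xs i)) ≤
          ∑ i, Real.log (isingP θ' (xs i)) :=
        le_of_mul_le_mul_left (by exact hA) (by positivity)
      have hprod : ∏ i, isingP θ (xs i) =
          Real.exp (∑ i, Real.log (isingP θ (xs i))) := by
        rw [Real.exp_sum]
        exact Finset.prod_congr rfl fun i _ =>
          (Real.exp_log (isingP_pos θ (xs i))).symm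
      have hg' : ∏ i, g (xs i) =
          Real.exp (∑ i, (energy m (xs i) - c)) := by
        rw [Real.exp_sum]
      rw [hprod, hg']
      apply Real.exp_le_exp.2
      have : ∀ i : Fin n, energy m (xs i) - c =
          (Real.log (isingP θ (xs i)) + Real.log (isingP θ' (xs i))) / 2 := by
        intro i
        rw [log_isingP, log_isingP, energy_avg]
        simp only [hc]; ring
      simp only [this, ← Finset.sum_div, Finset.sum_add_distrib]
      linarith
    · positivity
  refine step1.trans ?_
  have step2 : ∑ xs : Fin n → Fin p → Bool, ∏ i, g (xs i) =
      (∑ x : Fin p → Bool, g x) ^ n := (Fintype.sum_pow g n).symm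
  have step3 : ∑ x : Fin p → Bool, g x =
      Real.exp (Real.log (Zpart m) - c) := by
    simp only [hg, Real.exp_sub]
    rw [← Finset.sum_div, ← Zpart, Real.exp_log (Zpart_pos m)]
  rw [step2, step3, ← Real.exp_nat_mul, Jdiv_eq]
  apply le_of_eq
  congr 1
  simp only [hc]
  ring
end
end

section
/- Let p ≥ 2 be an integer and let G = (V,E) and G' = (V,E') be two graphs on p vertices with parameter vectors θ supported on E and θ' supported on E'. For x ∈ {−1,+1}^p define Δ(x) = Σ_{(u,v) ∈ E} θ_{uv} x_u x_v − Σ_{(u,v) ∈ E'} θ'_{uv} x_u x_v. Then for every edge (s,t) ∈ E \ E' and every configuration x ∈ {−1,+1}^p, there exists a configuration x' agreeing with x on all coordinates outside {s,t} and differing from x in x_s, in x_t, or in both, such that |Δ(x') − Δ(x)| ≥ |θ_{st}|. -/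
open scoped Classical BigOperators
open Real

noncomputable section

lemma sgn_not (b : Bool) : sgn (!b) = - sgn b := by cases b <;> simp [sgn]

lemma abs_sgn (b : Bool) : |sgn b| = 1 := by cases b <;> simp [sgn]

lemma energy_flip_identity {p : ℕ} (θ : Fin p → Fin p → ℝ) (hsym : IsSymParam θ)
    {s t : Fin p} (hst : s ≠ t) (x : Fin p → Bool) :
    (energy θ (Function.update x s (!x s)) - energy θ x)
    + (energy θ (Function.update x t (!x t)) - energy θ x)
    - (energy θ (Function.update (Function.update x s (!x s)) t (!x t)) - energy θ x)
      = -(4 * θ s t * sgn (x s) * sgn (x t)) := by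
  obtain ⟨hsymm, _⟩ := hsym
  unfold energy
  rw [show ∀ A B C D : ℝ, (A - D) + (B - D) - (C - D) = A + B - (C + D) by intros; ring]
  simp only [← Finset.sum_add_distrib, ← Finset.sum_sub_distrib]
  have key : ∀ a b : Fin p,
      ((if a < b then θ a b * sgn (Function.update x s (!x s) a) * sgn (Function.update x s (!x s) b) else 0)
        + (if a < b then θ a b * sgn (Function.update x t (!x t) a) * sgn (Function.update x t (!x t) b) else 0)
        - ((if a < b then θ a b * sgn (Function.update (Function.update x s (!x s)) t (!x t) a) * sgn (Function.update (Function.update x s (!x s)) t (!x t) b) else 0)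
          + (if a < b then θ a b * sgn (x a) * sgn (x b) else 0)))
      = (if a = s then (if b = t then (if a < b then -(4 * θ a b * sgn (x a) * sgn (x b)) else 0) else 0) else 0)
        + (if a = t then (if b = s then (if a < b then -(4 * θ a b * sgn (x a) * sgn (x b)) else 0) else 0) else 0) := by
    intro a b
    by_cases has : a = s <;> by_cases hat : a = t <;> by_cases hbs : b = s <;> by_cases hbt : b = t <;>
      first
      | (simp_all [Function.update_apply, sgn_not]; split_ifs <;> ring)
      | simp_all [Function.update_apply, sgn_not]
  calc (∑ a : Fin p, ∑ b : Fin p,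
      ((if a < b then θ a b * sgn (Function.update x s (!x s) a) * sgn (Function.update x s (!x s) b) else 0)
        + (if a < b then θ a b * sgn (Function.update x t (!x t) a) * sgn (Function.update x t (!x t) b) else 0)
        - ((if a < b then θ a b * sgn (Function.update (Function.update x s (!x s)) t (!x t) a) * sgn (Function.update (Function.update x s (!x s)) t (!x t) b) else 0)
          + (if a < b then θ a b * sgn (x a) * sgn (x b) else 0))))
      = ∑ a : Fin p, ∑ b : Fin p,
        ((if a = s then (if b = t then (if a < b then -(4 * θ a b * sgn (x a) * sgn (x b)) else 0) else 0) else 0)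
        + (if a = t then (if b = s then (if a < b then -(4 * θ a b * sgn (x a) * sgn (x b)) else 0) else 0) else 0)) := by
        exact Finset.sum_congr rfl fun a _ => Finset.sum_congr rfl fun b _ => key a b
    _ = -(4 * θ s t * sgn (x s) * sgn (x t)) := by
        simp only [Finset.sum_add_distrib]
        rw [Finset.sum_eq_single s, Finset.sum_eq_single t]
        · simp only [if_pos rfl]
          rw [Finset.sum_eq_single t, Finset.sum_eq_single s]
          · simp only [if_pos rfl]
            rcases lt_trichotomy s t with h | h | h
            · simp [h, not_lt.mpr h.le]
            · exact absurd h hst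
            · simp only [if_neg (not_lt.mpr h.le), if_pos h, hsymm t s]
              simp [mul_comm, mul_assoc, mul_left_comm]
          · intro b _ hb; simp [hb]
          · simp
          · intro b _ hb; simp [hb]
          · simp
        · intro a _ ha; simp [ha]
        · simp
        · intro a _ ha; simp [ha]
        · simp

lemma three_max (a b c M : ℝ) (h : |a + b - c| = 4 * M) (hM : 0 < M) :
    M ≤ |a| ∨ M ≤ |b| ∨ M ≤ |c| := by
  by_contra hc
  push_neg at hc
  obtain ⟨h1, h2, h3⟩ := hc
  have hb : |a + b - c| ≤ |a| + |b| + |c| := by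
    calc |a + b - c| = |(a + b) + (-c)| := by ring_nf
      _ ≤ |a + b| + |-c| := abs_add_le _ _
      _ ≤ |a| + |b| + |c| := by
          rw [abs_neg]; exact add_le_add_left (abs_add_le a b) _
  linarith

/-- Lemma (flipping lemma): with `Δ(x) = Σ_{(u,v)∈E} θ_{uv} x_u x_v −
Σ_{(u,v)∈E'} θ'_{uv} x_u x_v = energy θ x − energy θ' x`, for any edge
`(s,t) ∈ E \ E'` and configuration `x`, flipping `x_s`, `x_t`, or both yields a
configuration at which `Δ` has changed by at least `|θ_{st}|`. -/
theorem flipping_lemma (p : ℕ) (hp : 2 ≤ p)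
    (G G' : SimpleGraph (Fin p)) (θ θ' : Fin p → Fin p → ℝ)
    (hθsym : IsSymParam θ) (hθ'sym : IsSymParam θ')
    (hθsupp : ∀ u v : Fin p, ¬ G.Adj u v → θ u v = 0)
    (hθ'supp : ∀ u v : Fin p, ¬ G'.Adj u v → θ' u v = 0)
    (s t : Fin p) (hst : G.Adj s t ∧ ¬ G'.Adj s t)
    (x : Fin p → Bool) :
    ∃ x' : Fin p → Bool, (∀ u : Fin p, u ≠ s → u ≠ t → x' u = x u) ∧ x' ≠ x ∧
      |θ s t| ≤ |(energy θ x' - energy θ' x') - (energy θ x - energy θ' x)| := by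
  obtain ⟨hadj, hnadj⟩ := hst
  have hne : s ≠ t := hadj.ne
  set y1 := Function.update x s (!x s) with hy1
  set y2 := Function.update x t (!x t) with hy2
  set y3 := Function.update (Function.update x s (!x s)) t (!x t) with hy3
  have hagree1 : ∀ u : Fin p, u ≠ s → u ≠ t → y1 u = x u := by
    intro u hus _; simp [hy1, Function.update_apply, hus]
  have hagree2 : ∀ u : Fin p, u ≠ s → u ≠ t → y2 u = x u := by
    intro u _ hut; simp [hy2, Function.update_apply, hut]
  have hagree3 : ∀ u : Fin p, u ≠ s → u ≠ t → y3 u = x u := by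
    intro u hus hut; simp [hy3, Function.update_apply, hus, hut]
  have hne1 : y1 ≠ x := by
    intro h; have := congrFun h s; simp [hy1] at this
  have hne2 : y2 ≠ x := by
    intro h; have := congrFun h t; simp [hy2] at this
  have hne3 : y3 ≠ x := by
    intro h; have := congrFun h t; simp [hy3] at this
  by_cases h0 : θ s t = 0
  · exact ⟨y1, hagree1, hne1, by simp [h0]⟩
  · have hI := energy_flip_identity θ hθsym hne x
    have hI' := energy_flip_identity θ' hθ'sym hne x
    rw [hθ'supp s t hnadj] at hI'
    norm_num at hI'
    rw [← hy1, ← hy2, ← hy3] at hI hI'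
    have key : ((energy θ y1 - energy θ' y1) - (energy θ x - energy θ' x))
        + ((energy θ y2 - energy θ' y2) - (energy θ x - energy θ' x))
        - ((energy θ y3 - energy θ' y3) - (energy θ x - energy θ' x))
        = -(4 * θ s t * sgn (x s) * sgn (x t)) := by linarith
    have habs : |((energy θ y1 - energy θ' y1) - (energy θ x - energy θ' x))
        + ((energy θ y2 - energy θ' y2) - (energy θ x - energy θ' x))
        - ((energy θ y3 - energy θ' y3) - (energy θ x - energy θ' x))|
        = 4 * |θ s t| := by
      rw [key, abs_neg, abs_mul, abs_mul, abs_mul, abs_sgn, abs_sgn]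
      norm_num
    have hM : (0:ℝ) < |θ s t| := abs_pos.mpr h0
    rcases three_max _ _ _ _ habs hM with h | h | h
    · exact ⟨y1, hagree1, hne1, h⟩
    · exact ⟨y2, hagree2, hne2, h⟩
    · exact ⟨y3, hagree3, hne3, h⟩
end
end

section
/- Let p ≥ 3 be an integer and λ > 0 a real. For each unordered pair (s,t) of distinct vertices in {1,…,p}, let θ^{st} be the parameter vector with θ^{st}_{st} = λ and all other entries zero (the Ising model on the single-edge graph H_{st}). Then for any two distinct pairs (s,t) ≠ (u,v), the symmetrized Kullback–Leibler divergence satisfies S(θ^{st}‖θ^{uv}) = 2 λ tanh(λ). -/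
open scoped Classical BigOperators
open Real

noncomputable section

section Aux

def flipW {p : ℕ} (w : Fin p) (x : Fin p → Bool) : Fin p → Bool :=
  Function.update x w (!(x w))

lemma flipW_invol {p : ℕ} (w : Fin p) :
    Function.Involutive (flipW (p := p) w) := by
  intro x
  funext i
  by_cases h : i = w
  · subst h; simp [flipW]
  · simp [flipW, Function.update_of_ne h]

lemma flipW_apply_ne {p : ℕ} (w i : Fin p) (h : i ≠ w) (x : Fin p → Bool) :
    flipW w x i = x i := Function.update_of_ne h _ _

lemma flipW_apply_self {p : ℕ} (w : Fin p) (x : Fin p → Bool) :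
    flipW w x w = !(x w) := Function.update_self _ _ _

lemma sum_flipW {p : ℕ} (w : Fin p) (f : (Fin p → Bool) → ℝ) :
    ∑ x : Fin p → Bool, f (flipW w x) = ∑ x : Fin p → Bool, f x :=
  Function.Bijective.sum_comp (flipW_invol w).bijective f

lemma card_sum_const {p : ℕ} (c : ℝ) :
    ∑ _x : Fin p → Bool, c = 2^p * c := by
  rw [Finset.sum_const, Finset.card_univ]
  simp [nsmul_eq_mul]

lemma two_mul_sum_eq {p : ℕ} (w : Fin p) (f : (Fin p → Bool) → ℝ) :
    2 * ∑ x : Fin p → Bool, f x = ∑ x : Fin p → Bool, (f x + f (flipW w x)) := by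
  rw [Finset.sum_add_distrib, sum_flipW]; ring

lemma expsum {p : ℕ} (lam : ℝ) (s t : Fin p) (hst : s ≠ t) :
    ∑ x : Fin p → Bool, Real.exp (lam * sgn (x s) * sgn (x t))
      = 2^p * Real.cosh lam := by
  set f : (Fin p → Bool) → ℝ := fun x => Real.exp (lam * sgn (x s) * sgn (x t)) with hf
  have key : ∀ x : Fin p → Bool, f x + f (flipW t x) = 2 * Real.cosh lam := by
    intro x
    simp only [hf, flipW_apply_ne t s hst x, flipW_apply_self, sgn_not]
    cases hs : x s <;> cases ht : x t <;>
      · simp [sgn, Real.cosh_eq]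
        ring_nf
  have h2 := two_mul_sum_eq t f
  rw [Finset.sum_congr rfl (fun x _ => key x), card_sum_const] at h2
  linarith

lemma sinhsum {p : ℕ} (lam : ℝ) (s t : Fin p) (hst : s ≠ t) :
    ∑ x : Fin p → Bool,
        Real.exp (lam * sgn (x s) * sgn (x t)) * (sgn (x s) * sgn (x t))
      = 2^p * Real.sinh lam := by
  set f : (Fin p → Bool) → ℝ :=
    fun x => Real.exp (lam * sgn (x s) * sgn (x t)) * (sgn (x s) * sgn (x t)) with hf
  have key : ∀ x : Fin p → Bool, f x + f (flipW t x) = 2 * Real.sinh lam := by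
    intro x
    simp only [hf, flipW_apply_ne t s hst x, flipW_apply_self, sgn_not]
    cases hs : x s <;> cases ht : x t <;>
      · simp [sgn, Real.sinh_eq]
        ring_nf
  have h2 := two_mul_sum_eq t f
  rw [Finset.sum_congr rfl (fun x _ => key x), card_sum_const] at h2
  linarith

lemma crosssum {p : ℕ} (lam : ℝ) (s t u v : Fin p)
    (hus : u ≠ s) (hut : u ≠ t) (huv : u ≠ v) :
    ∑ x : Fin p → Bool,
        Real.exp (lam * sgn (x s) * sgn (x t)) * (sgn (x u) * sgn (x v)) = 0 := by
  set f : (Fin p → Bool) → ℝ :=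
    fun x => Real.exp (lam * sgn (x s) * sgn (x t)) * (sgn (x u) * sgn (x v)) with hf
  have key : ∀ x : Fin p → Bool, f (flipW u x) = - f x := by
    intro x
    simp only [hf, flipW_apply_ne u s (Ne.symm hus) x,
      flipW_apply_ne u t (Ne.symm hut) x,
      flipW_apply_ne u v (Ne.symm huv) x |>.symm]
    rw [flipW_apply_ne u v (Ne.symm huv) x, flipW_apply_self, sgn_not]
    ring
  have h : ∑ x : Fin p → Bool, f x = - ∑ x : Fin p → Bool, f x := by
    conv_lhs => rw [← sum_flipW u f]
    rw [Finset.sum_congr rfl (fun x _ => key x), Finset.sum_neg_distrib]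
  linarith

lemma energy_single {p : ℕ} (lam : ℝ) (s t : Fin p) (hst : s < t)
    (x : Fin p → Bool) :
    energy (fun a b => if (a = s ∧ b = t) ∨ (a = t ∧ b = s) then lam else 0) x
      = lam * sgn (x s) * sgn (x t) := by
  simp only [energy]
  rw [Finset.sum_eq_single s]
  · rw [Finset.sum_eq_single t]
    · simp [hst, hst.ne]
    · intro b _ hb
      have h1 : ¬((s = s ∧ b = t) ∨ (s = t ∧ b = s)) := by
        rintro (⟨-, rfl⟩ | ⟨h, -⟩)
        · exact hb rfl
        · exact hst.ne h
      rw [if_neg h1]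
      simp
    · intro h; exact absurd (Finset.mem_univ t) h
  · intro a _ ha
    apply Finset.sum_eq_zero
    intro b _
    split_ifs with h1 h2
    · rcases h2 with ⟨rfl, rfl⟩ | ⟨rfl, rfl⟩
      · exact absurd rfl ha
      · exact absurd h1 (lt_asymm hst)
    · ring
    · rfl
  · intro h; exact absurd (Finset.mem_univ s) h

lemma energy_single' {p : ℕ} (lam : ℝ) (s t : Fin p) (hst : s ≠ t)
    (x : Fin p → Bool) :
    energy (fun a b => if (a = s ∧ b = t) ∨ (a = t ∧ b = s) then lam else 0) x
      = lam * sgn (x s) * sgn (x t) := by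
  rcases hst.lt_or_gt with h | h
  · exact energy_single lam s t h x
  · have h2 := energy_single lam t s h x
    have hfun : (fun (a b : Fin p) =>
        if (a = s ∧ b = t) ∨ (a = t ∧ b = s) then lam else 0)
        = (fun a b => if (a = t ∧ b = s) ∨ (a = s ∧ b = t) then lam else 0) := by
      funext a b; exact if_congr or_comm rfl rfl
    rw [hfun, h2]; ring

lemma exists_out {α : Type*} {s t u v : α} (huv : u ≠ v)
    (hdiff : ¬((s = u ∧ t = v) ∨ (s = v ∧ t = u))) :
    (u ≠ s ∧ u ≠ t) ∨ (v ≠ s ∧ v ≠ t) := by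
  by_contra h
  push_neg at h
  obtain ⟨h1, h2⟩ := h
  rcases eq_or_ne u s with hus | hus
  · rcases eq_or_ne v t with hvt | hvt
    · exact hdiff (Or.inl ⟨hus.symm, hvt.symm⟩)
    · have hvs : v = s := by
        by_contra hn
        exact hvt (h2 hn)
      exact huv (hus.trans hvs.symm)
  · have hut := h1 hus
    rcases eq_or_ne v s with hvs | hvs
    · exact hdiff (Or.inr ⟨hvs.symm, hut.symm⟩)
    · exact huv (hut.trans (h2 hvs).symm)

lemma KL_formula {p : ℕ} (θ θ' : Fin p → Fin p → ℝ) (Z : ℝ) (hZ : Zpart θ = Z)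
    (hZ' : Zpart θ' = Z) (hZpos : 0 < Z) :
    KLdiv θ θ' = (∑ x : Fin p → Bool,
      Real.exp (energy θ x) * (energy θ x - energy θ' x)) / Z := by
  unfold KLdiv isingP
  rw [hZ, hZ', Finset.sum_div]
  apply Finset.sum_congr rfl
  intro x _
  have h : Real.exp (energy θ x) / Z / (Real.exp (energy θ' x) / Z)
      = Real.exp (energy θ x - energy θ' x) := by
    rw [Real.exp_sub, div_div_div_comm, div_self hZpos.ne', div_one]
  rw [h, Real.log_exp]
  ring

end Aux

/-- Ensemble A computation: for single-edge Ising models with weight `λ` on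
distinct edges `(s,t) ≠ (u,v)`, the symmetrized KL divergence equals
`2λ tanh(λ)`. -/
theorem symKL_single_edge (p : ℕ) (lam : ℝ) (hp : 3 ≤ p) (hlam : 0 < lam)
    (s t u v : Fin p) (hst : s ≠ t) (huv : u ≠ v)
    (hdiff : ¬((s = u ∧ t = v) ∨ (s = v ∧ t = u)))
    (θst θuv : Fin p → Fin p → ℝ)
    (hθst : θst = fun a b =>
      if (a = s ∧ b = t) ∨ (a = t ∧ b = s) then lam else 0)
    (hθuv : θuv = fun a b =>
      if (a = u ∧ b = v) ∨ (a = v ∧ b = u) then lam else 0) :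
    symKL θst θuv = 2 * lam * Real.tanh lam := by
  subst hθst hθuv
  have hdiff2 : ¬((u = s ∧ v = t) ∨ (u = t ∧ v = s)) := by
    intro h; apply hdiff
    rcases h with ⟨rfl, rfl⟩ | ⟨rfl, rfl⟩
    · exact Or.inl ⟨rfl, rfl⟩
    · exact Or.inr ⟨rfl, rfl⟩
  set θ1 : Fin p → Fin p → ℝ :=
    fun a b => if (a = s ∧ b = t) ∨ (a = t ∧ b = s) then lam else 0 with hθ1
  set θ2 : Fin p → Fin p → ℝ :=
    fun a b => if (a = u ∧ b = v) ∨ (a = v ∧ b = u) then lam else 0 with hθ2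
  have hE1 : ∀ x : Fin p → Bool, energy θ1 x = lam * sgn (x s) * sgn (x t) :=
    fun x => energy_single' lam s t hst x
  have hE2 : ∀ x : Fin p → Bool, energy θ2 x = lam * sgn (x u) * sgn (x v) :=
    fun x => energy_single' lam u v huv x
  have hZ1 : Zpart θ1 = 2 ^ p * Real.cosh lam := by
    unfold Zpart
    rw [Finset.sum_congr rfl (fun x _ => by rw [hE1 x])]
    exact expsum lam s t hst
  have hZ2 : Zpart θ2 = 2 ^ p * Real.cosh lam := by
    unfold Zpart
    rw [Finset.sum_congr rfl (fun x _ => by rw [hE2 x])]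
    exact expsum lam u v huv
  have hZpos : (0 : ℝ) < 2 ^ p * Real.cosh lam := by
    have := Real.cosh_pos (x := lam)
    positivity
  have hcross1 : ∑ x : Fin p → Bool,
      Real.exp (lam * sgn (x s) * sgn (x t)) * (sgn (x u) * sgn (x v)) = 0 := by
    rcases exists_out huv hdiff with ⟨h1, h2⟩ | ⟨h1, h2⟩
    · exact crosssum lam s t u v h1 h2 huv
    · rw [Finset.sum_congr rfl
        (fun x _ => by rw [mul_comm (sgn (x u)) (sgn (x v))])]
      exact crosssum lam s t v u h1 h2 huv.symm
  have hcross2 : ∑ x : Fin p → Bool,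
      Real.exp (lam * sgn (x u) * sgn (x v)) * (sgn (x s) * sgn (x t)) = 0 := by
    rcases exists_out hst hdiff2 with ⟨h1, h2⟩ | ⟨h1, h2⟩
    · exact crosssum lam u v s t h1 h2 hst
    · rw [Finset.sum_congr rfl
        (fun x _ => by rw [mul_comm (sgn (x s)) (sgn (x t))])]
      exact crosssum lam u v t s h1 h2 hst.symm
  have hS1 : ∑ x : Fin p → Bool,
      Real.exp (energy θ1 x) * (energy θ1 x - energy θ2 x)
      = lam * (2 ^ p * Real.sinh lam) := by
    have : ∀ x : Fin p → Bool,
        Real.exp (energy θ1 x) * (energy θ1 x - energy θ2 x)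
        = lam * (Real.exp (lam * sgn (x s) * sgn (x t)) * (sgn (x s) * sgn (x t)))
          - lam * (Real.exp (lam * sgn (x s) * sgn (x t)) * (sgn (x u) * sgn (x v))) := by
      intro x; rw [hE1 x, hE2 x]; ring
    rw [Finset.sum_congr rfl (fun x _ => this x), Finset.sum_sub_distrib,
      ← Finset.mul_sum, ← Finset.mul_sum, sinhsum lam s t hst, hcross1]
    ring
  have hS2 : ∑ x : Fin p → Bool,
      Real.exp (energy θ2 x) * (energy θ2 x - energy θ1 x)
      = lam * (2 ^ p * Real.sinh lam) := by
    have : ∀ x : Fin p → Bool,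
        Real.exp (energy θ2 x) * (energy θ2 x - energy θ1 x)
        = lam * (Real.exp (lam * sgn (x u) * sgn (x v)) * (sgn (x u) * sgn (x v)))
          - lam * (Real.exp (lam * sgn (x u) * sgn (x v)) * (sgn (x s) * sgn (x t))) := by
      intro x; rw [hE1 x, hE2 x]; ring
    rw [Finset.sum_congr rfl (fun x _ => this x), Finset.sum_sub_distrib,
      ← Finset.mul_sum, ← Finset.mul_sum, sinhsum lam u v huv, hcross2]
    ring
  unfold symKL
  rw [KL_formula θ1 θ2 _ hZ1 hZ2 hZpos, KL_formula θ2 θ1 _ hZ2 hZ1 hZpos,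
    hS1, hS2, Real.tanh_eq_sinh_div_cosh]
  have hc := Real.cosh_pos (x := lam)
  field_simp
  ring
end
end
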